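/- Let the finite group G be an internal central product of subgroups H and K amalgamating D (i.e. G = HK, H ∩ K = D and [H,K] = 1). If K is cyclic, the indices |H/D| and |K/D| are coprime, and D ≤ Z^∧(H), then M(G) ≅ M(H). -/

import Mathlib

/-!
Nonabelian tensor square modulo `q` (Conduché–Ellis / Brown–Loday for `q = 0`),
presented by generators `g ⊗ h` and `{(g,g)}` with the defining relations.
-/

namespace QTensor

/-- Generators of the `q`-tensor square: `t g h` stands for `g ⊗ h`,
and `d g` stands for the symbol `{(g,g)}`. -/
inductive Gen (G : Type) : Type
  | t : G → G → Gen G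
  | d : G → Gen G

variable (G : Type) [Group G]

/-- The word `g ⊗ h` in the free group on the generators. -/
def T (g h : G) : FreeGroup (Gen G) := FreeGroup.of (Gen.t g h)

/-- The word `{(g,g)}` in the free group on the generators. -/
def D (g : G) : FreeGroup (Gen G) := FreeGroup.of (Gen.d g)

/-- The word `∏_{i=1}^{q-1} (g⁻¹ ⊗ (^(g^(1-q+i)) g₁)^i)` appearing in relation (4). -/
def relProd (q : ℕ) (g g₁ : G) : FreeGroup (Gen G) :=
  ((List.range (q - 1)).map (fun j =>
    T G g⁻¹ ((g ^ ((1 : ℤ) - (q : ℤ) + (j + 1 : ℕ)) * g₁ *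
      (g ^ ((1 : ℤ) - (q : ℤ) + (j + 1 : ℕ)))⁻¹) ^ (j + 1)))).prod

/-- The defining relations of the `q`-tensor square.  For `q = 0` the symbols
`{(g,g)}` are killed, so that the group is the Brown–Loday nonabelian tensor
square generated by the `g ⊗ h` subject to relations (1) and (2). -/
def rels (q : ℕ) : Set (FreeGroup (Gen G)) :=
  {r | ∃ g g₁ h : G,
      r = T G (g * g₁) h * (T G (g * g₁ * g⁻¹) (g * h * g⁻¹) * T G g h)⁻¹} ∪
  {r | ∃ g h h₁ : G,
      r = T G g (h * h₁) * (T G g h * T G (h * g * h⁻¹) (h * h₁ * h⁻¹))⁻¹} ∪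
  {r | ∃ g g₁ h₁ : G,
      r = D G g * T G g₁ h₁ * (D G g)⁻¹ *
        (T G (g ^ q * g₁ * (g ^ q)⁻¹) (g ^ q * h₁ * (g ^ q)⁻¹))⁻¹} ∪
  {r | ∃ g g₁ : G,
      r = D G (g * g₁) * (D G g * relProd G q g g₁ * D G g₁)⁻¹} ∪
  {r | ∃ g g₁ : G,
      r = D G g * D G g₁ * (D G g)⁻¹ * (D G g₁)⁻¹ * (T G (g ^ q) (g₁ ^ q))⁻¹} ∪
  {r | ∃ g h : G,
      r = D G (g * h * g⁻¹ * h⁻¹) * ((T G g h) ^ q)⁻¹} ∪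
  {r | q = 0 ∧ ∃ g : G, r = D G g}

/-- The nonabelian tensor square modulo `q`, `G ⊗^q G`. -/
def tensorSquare (q : ℕ) : Type := PresentedGroup (rels G q)

instance (q : ℕ) : Group (tensorSquare G q) := by unfold tensorSquare; infer_instance

/-- The element `g ⊗ h` of `G ⊗^q G`. -/
def tmk (q : ℕ) (g h : G) : tensorSquare G q := PresentedGroup.of (Gen.t g h)

/-- The element `{(g,g)}` of `G ⊗^q G`. -/
def dmk (q : ℕ) (g : G) : tensorSquare G q := PresentedGroup.of (Gen.d g)

/-- `∇^q(G)`, the normal closure of the elements `g ⊗ g` in `G ⊗^q G`. -/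
def nabla (q : ℕ) : Subgroup (tensorSquare G q) :=
  Subgroup.normalClosure {x | ∃ g : G, x = tmk G q g g}

instance (q : ℕ) : (nabla G q).Normal := Subgroup.normalClosure_normal

/-- The exterior square modulo `q`, `G ∧^q G = (G ⊗^q G)/∇^q(G)`. -/
def extSquare (q : ℕ) : Type := tensorSquare G q ⧸ nabla G q

instance (q : ℕ) : Group (extSquare G q) := by unfold extSquare; infer_instance

/-- The element `g ∧ h` of `G ∧^q G`. -/
def wmk (q : ℕ) (g h : G) : extSquare G q := QuotientGroup.mk (tmk G q g h)

/-- The image of the symbol `{(g,g)}` in `G ∧^q G`. -/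
def dwmk (q : ℕ) (g : G) : extSquare G q := QuotientGroup.mk (dmk G q g)

/-- The exterior centre variant `Z^∧_q(G) = {g : g ∧ h = 1 for all h}` (as a set). -/
def Zext (q : ℕ) : Set G := {g | ∀ h : G, wmk G q g h = 1}

/-- `E^∧_q(G) = {g ∈ Z^∧_q(G) : {(g,g)} = 1 in G ∧^q G}` (as a set); for `q = 0`
the second condition is automatic, so `E^∧_0(G) = Z^∧(G)`. -/
def Eext (q : ℕ) : Set G := {g | (∀ h : G, wmk G q g h = 1) ∧ dwmk G q g = 1}

/-- The subgroup `G^q[G,G]` generated by all `q`-th powers and all commutators. -/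
def qPowComm (q : ℕ) : Subgroup G :=
  Subgroup.closure ({x | ∃ g : G, x = g ^ q} ∪ {x | ∃ a b : G, x = a * b * a⁻¹ * b⁻¹})

theorem pow_mem_qPowComm (q : ℕ) (g : G) : g ^ q ∈ qPowComm G q :=
  Subgroup.subset_closure (Or.inl ⟨g, rfl⟩)

theorem commutator_mem_qPowComm (q : ℕ) (a b : G) :
    a * b * a⁻¹ * b⁻¹ ∈ qPowComm G q :=
  Subgroup.subset_closure (Or.inr ⟨a, b, rfl⟩)

open scoped commutatorElement in
theorem mem_commutator (a b : G) : ⁅a, b⁆ ∈ commutator G :=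
  Subgroup.commutator_mem_commutator (Subgroup.mem_top a) (Subgroup.mem_top b)

/-- `M₀^q(G)`: the subgroup of `G ∧^q G` generated by the `x ∧ y` with `[x,y] = 1`.
(It is contained in the `q`-Schur multiplier `M^q(G)`.) -/
def M0 (q : ℕ) : Subgroup (extSquare G q) :=
  Subgroup.closure {x | ∃ a b : G, a * b = b * a ∧ x = wmk G q a b}

/-- `M̂₀^q(G)`: the subgroup of `G ∧^q G` generated by the `x ∧ y` with `[x,y] = 1`
together with the `{(g,g)}` with `g^q = 1`. -/
def M0hat (q : ℕ) : Subgroup (extSquare G q) :=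
  Subgroup.closure
    ({x | ∃ a b : G, a * b = b * a ∧ x = wmk G q a b} ∪
     {x | ∃ g : G, g ^ q = 1 ∧ x = dwmk G q g})

/-- A group `Q` is capable if `Q ≅ E/Z(E)` for some group `E`. -/
def Capable (Q : Type) [Group Q] : Prop :=
  ∃ (E : Type) (_ : Group E), Nonempty (Q ≃* E ⧸ Subgroup.center E)

end QTensor

namespace QTensor

variable {A : Type} [Group A]

section Basic

lemma tmk_def (q : ℕ) (g h : A) :
    tmk A q g h = PresentedGroup.mk (rels A q) (T A g h) := rfl

lemma dmk_def (q : ℕ) (g : A) :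
    dmk A q g = PresentedGroup.mk (rels A q) (D A g) := rfl

lemma mk_rels_eq_one {q : ℕ} {r : FreeGroup (Gen A)} (hr : r ∈ rels A q) :
    PresentedGroup.mk (rels A q) r = 1 := by
  have h : r ∈ Subgroup.normalClosure (rels A q) := Subgroup.subset_normalClosure hr
  exact (QuotientGroup.eq_one_iff r).mpr h

lemma trel1 (q : ℕ) (g g₁ h : A) :
    tmk A q (g * g₁) h = tmk A q (g * g₁ * g⁻¹) (g * h * g⁻¹) * tmk A q g h := by
  have hr : (T A (g * g₁) h * (T A (g * g₁ * g⁻¹) (g * h * g⁻¹) * T A g h)⁻¹) ∈ rels A q :=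
    Or.inl (Or.inl (Or.inl (Or.inl (Or.inl (Or.inl ⟨g, g₁, h, rfl⟩)))))
  have := mk_rels_eq_one hr
  rw [map_mul, map_inv] at this
  have h2 := mul_inv_eq_one.mp this
  rw [map_mul] at h2
  exact h2

lemma trel2 (q : ℕ) (g h h₁ : A) :
    tmk A q g (h * h₁) = tmk A q g h * tmk A q (h * g * h⁻¹) (h * h₁ * h⁻¹) := by
  have hr : (T A g (h * h₁) * (T A g h * T A (h * g * h⁻¹) (h * h₁ * h⁻¹))⁻¹) ∈ rels A q :=
    Or.inl (Or.inl (Or.inl (Or.inl (Or.inl (Or.inr ⟨g, h, h₁, rfl⟩)))))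
  have := mk_rels_eq_one hr
  rw [map_mul, map_inv] at this
  have h2 := mul_inv_eq_one.mp this
  rw [map_mul] at h2
  exact h2

lemma dmk_eq_one (g : A) : dmk A 0 g = 1 := by
  have hr : D A g ∈ rels A 0 := Or.inr ⟨rfl, g, rfl⟩
  exact mk_rels_eq_one hr

lemma wmk_def (q : ℕ) (g h : A) :
    wmk A q g h = QuotientGroup.mk' (nabla A q) (tmk A q g h) := rfl

lemma dwmk_eq_one (g : A) : dwmk A 0 g = 1 := by
  have : dwmk A 0 g = QuotientGroup.mk' (nabla A 0) (dmk A 0 g) := rfl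
  rw [this, dmk_eq_one, map_one]
  rfl

lemma wrel1 (q : ℕ) (g g₁ h : A) :
    wmk A q (g * g₁) h = wmk A q (g * g₁ * g⁻¹) (g * h * g⁻¹) * wmk A q g h := by
  rw [wmk_def, wmk_def, wmk_def, trel1, map_mul]
  rfl

lemma wrel2 (q : ℕ) (g h h₁ : A) :
    wmk A q g (h * h₁) = wmk A q g h * wmk A q (h * g * h⁻¹) (h * h₁ * h⁻¹) := by
  rw [wmk_def, wmk_def, wmk_def, trel2, map_mul]
  rfl

lemma wmk_self (q : ℕ) (g : A) : wmk A q g g = 1 := by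
  rw [wmk_def]
  rw [QuotientGroup.mk'_apply]
  exact (QuotientGroup.eq_one_iff _).mpr (Subgroup.subset_normalClosure ⟨g, rfl⟩)

lemma wmk_one_right (q : ℕ) (g : A) : wmk A q g 1 = 1 := by
  have := wrel2 q g 1 1
  simp only [one_mul, mul_one, inv_one] at this
  exact left_eq_mul.mp this

lemma wmk_one_left (q : ℕ) (h : A) : wmk A q 1 h = 1 := by
  have := wrel1 q 1 1 h
  simp only [one_mul, mul_one, inv_one] at this
  exact left_eq_mul.mp this

end Basic

end QTensor
namespace QTensor

variable {A : Type} [Group A]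

section Central

variable {q : ℕ} {z : A}

lemma conj_central (hz : ∀ x : A, z * x = x * z) (x : A) : x * z * x⁻¹ = z := by
  rw [← hz x]; group

lemma conj_by_central (hz : ∀ x : A, z * x = x * z) (x : A) : z * x * z⁻¹ = x := by
  rw [hz x]; group

lemma wmk_mul_right_central (hz : ∀ x : A, z * x = x * z) (g h₁ : A) :
    wmk A q g (z * h₁) = wmk A q g z * wmk A q g h₁ := by
  have := wrel2 q g z h₁
  rwa [conj_by_central hz, conj_by_central hz] at this

lemma wmk_mul_left_snd_central (hz : ∀ x : A, z * x = x * z) (g g₁ : A) :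
    wmk A q (g * g₁) z = wmk A q (g * g₁ * g⁻¹) z * wmk A q g z := by
  have := wrel1 q g g₁ z
  rwa [conj_central hz] at this

lemma wmk_pow_right_central (hz : ∀ x : A, z * x = x * z) (g : A) (n : ℕ) :
    wmk A q g (z ^ n) = (wmk A q g z) ^ n := by
  induction n with
  | zero => simpa using wmk_one_right q g
  | succ n ih =>
      rw [pow_succ', wmk_mul_right_central hz, ih]
      exact (pow_succ' _ _).symm

lemma wmk_inv_right_central (hz : ∀ x : A, z * x = x * z) (g : A) :
    wmk A q g z⁻¹ = (wmk A q g z)⁻¹ := by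
  have h0 : wmk A q g (z * z⁻¹) = wmk A q g z * wmk A q g z⁻¹ :=
    wmk_mul_right_central hz g z⁻¹
  rw [mul_inv_cancel, wmk_one_right] at h0
  exact (inv_eq_of_mul_eq_one_right h0.symm).symm

lemma wmk_zpow_right_central (hz : ∀ x : A, z * x = x * z) (g : A) (n : ℤ) :
    wmk A q g (z ^ n) = (wmk A q g z) ^ n := by
  cases n with
  | ofNat n => simpa using wmk_pow_right_central hz g n
  | negSucc n =>
      have hz' : ∀ x : A, z ^ (n + 1) * x = x * z ^ (n + 1) := fun x =>
        ((show Commute z x from hz x).pow_left (n + 1)).eq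
      rw [zpow_negSucc, zpow_negSucc, wmk_inv_right_central hz',
        wmk_pow_right_central hz]

lemma wmk_pow_left_central (hz : ∀ x : A, z * x = x * z) (g : A) (n : ℕ) :
    wmk A q (g ^ n) z = (wmk A q g z) ^ n := by
  induction n with
  | zero => simpa using wmk_one_left q z
  | succ n ih =>
      have h1 : wmk A q (g * g ^ n) z = wmk A q (g * g ^ n * g⁻¹) z * wmk A q g z :=
        wmk_mul_left_snd_central hz g (g ^ n)
      have h2 : g * g ^ n * g⁻¹ = g ^ n := by group
      rw [h2] at h1
      rw [pow_succ', h1, ih]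
      exact (pow_succ _ _).symm

lemma wmk_inv_left_central (hz : ∀ x : A, z * x = x * z) (g : A) :
    wmk A q g⁻¹ z = (wmk A q g z)⁻¹ := by
  have h1 : wmk A q (g * g⁻¹) z = wmk A q (g * g⁻¹ * g⁻¹) z * wmk A q g z :=
    wmk_mul_left_snd_central hz g g⁻¹
  have h2 : g * g⁻¹ * g⁻¹ = g⁻¹ := by group
  rw [h2, mul_inv_cancel, wmk_one_left] at h1
  exact eq_inv_of_mul_eq_one_left h1.symm

lemma wmk_zpow_left_central (hz : ∀ x : A, z * x = x * z) (g : A) (n : ℤ) :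
    wmk A q (g ^ n) z = (wmk A q g z) ^ n := by
  cases n with
  | ofNat n => simpa using wmk_pow_left_central hz g n
  | negSucc n =>
      rw [zpow_negSucc, zpow_negSucc, wmk_inv_left_central hz,
        wmk_pow_left_central hz]

lemma wmk_zpow_zpow_central (hz : ∀ x : A, z * x = x * z) (a b : ℤ) :
    wmk A q (z ^ a) (z ^ b) = 1 := by
  have hzb : ∀ x : A, z ^ b * x = x * z ^ b := fun x =>
    ((show Commute z x from hz x).zpow_left b).eq
  rw [wmk_zpow_left_central hzb, wmk_zpow_right_central hz, wmk_self]
  simp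

/-- A central element which is left-exterior-trivial is right-exterior-trivial. -/
lemma wmk_right_eq_one_of_central (hz : ∀ x : A, z * x = x * z)
    (hL : ∀ x : A, wmk A q z x = 1) (x : A) : wmk A q x z = 1 := by
  have h1 : wmk A q (x * z) (x * z) = 1 := wmk_self q (x * z)
  have h2 := wrel1 q x z (x * z)
  rw [conj_central hz] at h2
  have h3 : wmk A q x (x * z) = wmk A q x z := by
    have := wrel2 q x x z
    rw [wmk_self] at this
    have h4 : x * x * x⁻¹ = x := by group
    rw [h4, conj_central hz, one_mul] at this
    exact this
  rw [h3, hL, one_mul] at h2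
  rw [h2] at h1
  exact h1

/-- A central element which is right-exterior-trivial is left-exterior-trivial. -/
lemma wmk_left_eq_one_of_central (hz : ∀ x : A, z * x = x * z)
    (hR : ∀ x : A, wmk A q x z = 1) (x : A) : wmk A q z x = 1 := by
  have h1 : wmk A q (x * z) (x * z) = 1 := wmk_self q (x * z)
  have h2 := wrel1 q x z (x * z)
  rw [conj_central hz] at h2
  have hxxz : x * (x * z) * x⁻¹ = x * z := by
    calc x * (x * z) * x⁻¹ = x * x * (z * x⁻¹) := by group
      _ = x * x * (x⁻¹ * z) := by rw [hz x⁻¹]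
      _ = x * z := by group
  rw [hxxz] at h2
  have h3 : wmk A q x (x * z) = 1 := by
    have h := wrel2 q x x z
    have h4 : x * x * x⁻¹ = x := by group
    rw [wmk_self, h4, conj_central hz, one_mul, hR] at h
    exact h
  have h5 : wmk A q z (x * z) = wmk A q z x := by
    have h := wrel2 q z x z
    rw [conj_central hz, wmk_self, mul_one] at h
    exact h
  rw [h3, mul_one, h5] at h2
  rw [← h2]
  exact h1

end Central

end QTensor
namespace QTensor

section Psi

variable {G : Type} [Group G] (H : Subgroup G)

/-- Generator images for the map `H ∧ H → G ∧ G` induced by inclusion. -/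
def psiGen : Gen ↥H → extSquare G 0
  | Gen.t a b => wmk G 0 ↑a ↑b
  | Gen.d a => dwmk G 0 ↑a

lemma psi_rels : ∀ r ∈ rels (↥H) 0, FreeGroup.lift (psiGen H) r = 1 := by
  rintro r
    ((((((⟨g, g₁, h, rfl⟩ | ⟨g, h, h₁, rfl⟩) | ⟨g, g₁, h₁, rfl⟩) | ⟨g, g₁, rfl⟩) |
      ⟨g, g₁, rfl⟩) | ⟨g, h, rfl⟩) | ⟨-, g, rfl⟩)
  · simp only [T, map_mul, map_inv, FreeGroup.lift_apply_of, psiGen, Subgroup.coe_mul,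
      InvMemClass.coe_inv, mul_inv_eq_one]
    exact wrel1 0 (g : G) g₁ h
  · simp only [T, map_mul, map_inv, FreeGroup.lift_apply_of, psiGen, Subgroup.coe_mul,
      InvMemClass.coe_inv, mul_inv_eq_one]
    exact wrel2 0 (g : G) h h₁
  · simp [T, D, psiGen, dwmk_eq_one]
  · simp [T, D, relProd, psiGen, dwmk_eq_one]
  · simp [T, D, psiGen, dwmk_eq_one, wmk_one_left]
  · simp [T, D, psiGen, dwmk_eq_one]
  · simp [D, psiGen, dwmk_eq_one]

/-- The map `H ⊗ H → G ∧ G`. -/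
def psi0 : tensorSquare (↥H) 0 →* extSquare G 0 :=
  PresentedGroup.toGroup (psi_rels H)

lemma psi0_tmk (a b : ↥H) : psi0 H (tmk (↥H) 0 a b) = wmk G 0 ↑a ↑b := by
  exact PresentedGroup.toGroup.of (psi_rels H)

lemma psi0_dmk (a : ↥H) : psi0 H (dmk (↥H) 0 a) = dwmk G 0 ↑a := by
  exact PresentedGroup.toGroup.of (psi_rels H)

/-- The map `ψ : H ∧ H → G ∧ G` induced by the inclusion. -/
def psi : extSquare (↥H) 0 →* extSquare G 0 :=
  QuotientGroup.lift (nabla (↥H) 0) (psi0 H) (by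
    refine Subgroup.normalClosure_le_normal ?_
    rintro y ⟨a, rfl⟩
    rw [SetLike.mem_coe, MonoidHom.mem_ker, psi0_tmk, wmk_self])

lemma psi_wmk (a b : ↥H) : psi H (wmk (↥H) 0 a b) = wmk G 0 ↑a ↑b := by
  have : psi H (wmk (↥H) 0 a b) = psi0 H (tmk (↥H) 0 a b) :=
    QuotientGroup.lift_mk' _ _ _
  rw [this, psi0_tmk]

lemma psi_dwmk (a : ↥H) : psi H (dwmk (↥H) 0 a) = dwmk G 0 ↑a := by
  have : psi H (dwmk (↥H) 0 a) = psi0 H (dmk (↥H) 0 a) :=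
    QuotientGroup.lift_mk' _ _ _
  rw [this, psi0_dmk]

end Psi

end QTensor
namespace QTensor

section Main

variable {G : Type} [Group G] {H K D : Subgroup G}

/-- Bundled central-product data. -/
structure CPD (G : Type) [Group G] (H K D : Subgroup G) : Prop where
  decomp : ∀ g : G, ∃ h ∈ H, ∃ k ∈ K, g = h * k
  inf_eq : H ⊓ K = D
  comm : ∀ h ∈ H, ∀ k ∈ K, h * k = k * h
  cyc : IsCyclic ↥K
  zext : ∀ x : ↥H, (x : G) ∈ D → ∀ b : ↥H, wmk (↥H) 0 x b = 1

namespace CPD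

variable (cp : CPD G H K D)
include cp

noncomputable def sig (g : G) : ↥H :=
  ⟨(cp.decomp g).choose, (cp.decomp g).choose_spec.1⟩

noncomputable def kap (g : G) : G := (cp.decomp g).choose_spec.2.choose

lemma kap_mem (g : G) : cp.kap g ∈ K := (cp.decomp g).choose_spec.2.choose_spec.1

lemma sig_kap (g : G) : g = ↑(cp.sig g) * cp.kap g :=
  (cp.decomp g).choose_spec.2.choose_spec.2

lemma k_central : ∀ k ∈ K, ∀ x : G, k * x = x * k := by
  intro k hk x
  obtain ⟨h', hh', k', hk', rfl⟩ := cp.decomp x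
  have h1 : k * h' = h' * k := (cp.comm h' hh' k hk).symm
  have h2 : k * k' = k' * k := by
    obtain ⟨c, hc⟩ := cp.cyc
    obtain ⟨m, hm⟩ := Subgroup.mem_zpowers_iff.mp (hc ⟨k, hk⟩)
    obtain ⟨n, hn⟩ := Subgroup.mem_zpowers_iff.mp (hc ⟨k', hk'⟩)
    have hm' : ((c : G)) ^ m = k := by
      have := congrArg (Subtype.val) hm; simpa using this
    have hn' : ((c : G)) ^ n = k' := by
      have := congrArg (Subtype.val) hn; simpa using this
    rw [← hm', ← hn']
    exact ((Commute.refl (c : G)).zpow_zpow m n).eq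
  rw [← mul_assoc, h1, mul_assoc, h2, ← mul_assoc]

lemma D_le_H : D ≤ H := cp.inf_eq ▸ inf_le_left
lemma D_le_K : D ≤ K := cp.inf_eq ▸ inf_le_right

lemma mem_D {x : G} (hH : x ∈ H) (hK : x ∈ K) : x ∈ D := by
  rw [← cp.inf_eq]; exact ⟨hH, hK⟩

/-- Any two elements of `K` pair trivially in `G ∧ G`. -/
lemma wmk_KK {k k' : G} (hk : k ∈ K) (hk' : k' ∈ K) : wmk G 0 k k' = 1 := by
  obtain ⟨c, hc⟩ := cp.cyc
  obtain ⟨m, hm⟩ := Subgroup.mem_zpowers_iff.mp (hc ⟨k, hk⟩)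
  obtain ⟨n, hn⟩ := Subgroup.mem_zpowers_iff.mp (hc ⟨k', hk'⟩)
  have hm' : ((c : G)) ^ m = k := by
    have := congrArg (Subtype.val) hm; simpa using this
  have hn' : ((c : G)) ^ n = k' := by
    have := congrArg (Subtype.val) hn; simpa using this
  rw [← hm', ← hn']
  exact wmk_zpow_zpow_central (cp.k_central c c.2) m n

/-- Elements of `D` are central in `H`. -/
lemma d_central {d : ↥H} (hd : (d : G) ∈ K) : ∀ x : ↥H, d * x = x * d := fun x =>
  Subtype.ext (cp.k_central d hd x)

lemma wmkH_d_right {d : ↥H} (hd : (d : G) ∈ D) (x : ↥H) : wmk (↥H) 0 x d = 1 :=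
  wmk_right_eq_one_of_central (cp.d_central (cp.D_le_K hd)) (cp.zext d hd) x

lemma wmkH_congr_left {a a' : ↥H} (h : (↑(a⁻¹ * a') : G) ∈ D) (b : ↥H) :
    wmk (↥H) 0 a' b = wmk (↥H) 0 a b := by
  set d : ↥H := a⁻¹ * a' with hdd
  have ha' : a' = a * d := by rw [hdd]; group
  have hdc := cp.d_central (d := d) (cp.D_le_K h)
  have h1 := wrel1 (A := ↥H) 0 a d b
  rw [conj_central hdc, cp.zext d h, one_mul] at h1
  rw [ha', h1]

lemma wmkH_congr_right {b b' : ↥H} (h : (↑(b⁻¹ * b') : G) ∈ D) (a : ↥H) :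
    wmk (↥H) 0 a b' = wmk (↥H) 0 a b := by
  set d : ↥H := b⁻¹ * b' with hdd
  have hb' : b' = b * d := by rw [hdd]; group
  have hdc := cp.d_central (d := d) (cp.D_le_K h)
  have h1 := wrel2 (A := ↥H) 0 a b d
  rw [conj_central hdc, cp.wmkH_d_right h, mul_one] at h1
  rw [hb', h1]

lemma sig_diff_mem {g : G} {a : ↥H} {k : G} (hk : k ∈ K) (hg : g = ↑a * k) :
    (↑((cp.sig g)⁻¹ * a) : G) ∈ D := by
  have e : (↑(cp.sig g) : G) * cp.kap g = ↑a * k := (cp.sig_kap g).symm.trans hg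
  have e2 : (↑(cp.sig g) : G)⁻¹ * ↑a = cp.kap g * k⁻¹ := by
    calc (↑(cp.sig g) : G)⁻¹ * ↑a
        = (↑(cp.sig g) : G)⁻¹ * ((↑a * k) * k⁻¹) := by group
      _ = (↑(cp.sig g) : G)⁻¹ * ((↑(cp.sig g) * cp.kap g) * k⁻¹) := by rw [← e]
      _ = cp.kap g * k⁻¹ := by group
  refine cp.mem_D (SetLike.coe_mem _) ?_
  have : (↑((cp.sig g)⁻¹ * a) : G) = cp.kap g * k⁻¹ := by push_cast; exact e2
  rw [this]
  exact K.mul_mem (cp.kap_mem g) (K.inv_mem hk)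

lemma wmk_sig_left {g : G} {a : ↥H} {k : G} (hk : k ∈ K) (hg : g = ↑a * k) (b : ↥H) :
    wmk (↥H) 0 (cp.sig g) b = wmk (↥H) 0 a b :=
  (cp.wmkH_congr_left (cp.sig_diff_mem hk hg) b).symm

lemma wmk_sig_right {g : G} {a : ↥H} {k : G} (hk : k ∈ K) (hg : g = ↑a * k) (b : ↥H) :
    wmk (↥H) 0 b (cp.sig g) = wmk (↥H) 0 b a :=
  (cp.wmkH_congr_right (cp.sig_diff_mem hk hg) b).symm

end CPD

end Main

end QTensor
namespace QTensor

namespace CPD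

variable {G : Type} [Group G] {H K D : Subgroup G} (cp : CPD G H K D)
include cp

lemma dec_mul (g g₁ : G) :
    g * g₁ = ↑(cp.sig g * cp.sig g₁) * (cp.kap g * cp.kap g₁) := by
  have hA := cp.sig_kap g
  have hB := cp.sig_kap g₁
  have c1 : ∀ x : G, cp.kap g * x = x * cp.kap g := cp.k_central _ (cp.kap_mem g)
  calc g * g₁ = (↑(cp.sig g) * cp.kap g) * (↑(cp.sig g₁) * cp.kap g₁) := by
        rw [← hA, ← hB]
    _ = ↑(cp.sig g) * (cp.kap g * ↑(cp.sig g₁)) * cp.kap g₁ := by group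
    _ = ↑(cp.sig g) * (↑(cp.sig g₁) * cp.kap g) * cp.kap g₁ := by rw [c1]
    _ = ↑(cp.sig g * cp.sig g₁) * (cp.kap g * cp.kap g₁) := by push_cast; group

lemma dec_conj (g g₁ : G) :
    g * g₁ * g⁻¹ = ↑(cp.sig g * cp.sig g₁ * (cp.sig g)⁻¹) * cp.kap g₁ := by
  have hA := cp.sig_kap g
  have hB := cp.sig_kap g₁
  have c1 : ∀ x : G, cp.kap g * x = x * cp.kap g := cp.k_central _ (cp.kap_mem g)
  have c2 : ∀ x : G, cp.kap g₁ * x = x * cp.kap g₁ := cp.k_central _ (cp.kap_mem g₁)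
  calc g * g₁ * g⁻¹
      = (↑(cp.sig g) * cp.kap g) * (↑(cp.sig g₁) * cp.kap g₁) *
        (↑(cp.sig g) * cp.kap g)⁻¹ := by rw [← hA, ← hB]
    _ = ↑(cp.sig g) * (cp.kap g * (↑(cp.sig g₁) * cp.kap g₁) * (cp.kap g)⁻¹) *
        (↑(cp.sig g))⁻¹ := by group
    _ = ↑(cp.sig g) * (↑(cp.sig g₁) * cp.kap g₁) * (↑(cp.sig g))⁻¹ := by
        rw [conj_by_central c1]
    _ = ↑(cp.sig g) * ↑(cp.sig g₁) * (cp.kap g₁ * (↑(cp.sig g))⁻¹) := by group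
    _ = ↑(cp.sig g) * ↑(cp.sig g₁) * ((↑(cp.sig g))⁻¹ * cp.kap g₁) := by rw [c2]
    _ = ↑(cp.sig g * cp.sig g₁ * (cp.sig g)⁻¹) * cp.kap g₁ := by push_cast; group

end CPD

section Phi

variable {G : Type} [Group G] {H K D : Subgroup G}

/-- Generator images for the map `G ∧ G → H ∧ H`. -/
noncomputable def CPD.phiGen (cp : CPD G H K D) : Gen G → extSquare (↥H) 0
  | Gen.t g g' => wmk (↥H) 0 (cp.sig g) (cp.sig g')
  | Gen.d _ => 1

namespace CPD

variable (cp : CPD G H K D)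
include cp

lemma phi_rels : ∀ r ∈ rels G 0, FreeGroup.lift cp.phiGen r = 1 := by
  rintro r
    ((((((⟨g, g₁, h, rfl⟩ | ⟨g, h, h₁, rfl⟩) | ⟨g, g₁, h₁, rfl⟩) | ⟨g, g₁, rfl⟩) |
      ⟨g, g₁, rfl⟩) | ⟨g, h, rfl⟩) | ⟨-, g, rfl⟩)
  · simp only [T, map_mul, map_inv, FreeGroup.lift_apply_of, phiGen, mul_inv_eq_one]
    rw [cp.wmk_sig_left (K.mul_mem (cp.kap_mem g) (cp.kap_mem g₁)) (cp.dec_mul g g₁),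
      cp.wmk_sig_left (cp.kap_mem g₁) (cp.dec_conj g g₁),
      cp.wmk_sig_right (cp.kap_mem h) (cp.dec_conj g h)]
    exact wrel1 0 (cp.sig g) (cp.sig g₁) (cp.sig h)
  · simp only [T, map_mul, map_inv, FreeGroup.lift_apply_of, phiGen, mul_inv_eq_one]
    rw [cp.wmk_sig_right (K.mul_mem (cp.kap_mem h) (cp.kap_mem h₁)) (cp.dec_mul h h₁),
      cp.wmk_sig_left (cp.kap_mem g) (cp.dec_conj h g),
      cp.wmk_sig_right (cp.kap_mem h₁) (cp.dec_conj h h₁)]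
    exact wrel2 0 (cp.sig g) (cp.sig h) (cp.sig h₁)
  · simp [T, QTensor.D, phiGen, FreeGroup.lift_apply_of]
  · simp [T, QTensor.D, relProd, phiGen, FreeGroup.lift_apply_of]
  · simp [T, QTensor.D, phiGen, wmk_self, FreeGroup.lift_apply_of]
  · simp [T, QTensor.D, phiGen, FreeGroup.lift_apply_of]
  · simp [QTensor.D, phiGen, FreeGroup.lift_apply_of]

end CPD

/-- The map `G ⊗ G → H ∧ H`. -/
noncomputable def CPD.phi0 (cp : CPD G H K D) : tensorSquare G 0 →* extSquare (↥H) 0 :=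
  PresentedGroup.toGroup cp.phi_rels

lemma CPD.phi0_tmk (cp : CPD G H K D) (g g' : G) :
    cp.phi0 (tmk G 0 g g') = wmk (↥H) 0 (cp.sig g) (cp.sig g') :=
  PresentedGroup.toGroup.of cp.phi_rels

lemma CPD.phi0_dmk (cp : CPD G H K D) (g : G) : cp.phi0 (dmk G 0 g) = 1 :=
  PresentedGroup.toGroup.of cp.phi_rels

/-- The map `φ : G ∧ G → H ∧ H`. -/
noncomputable def CPD.phi (cp : CPD G H K D) : extSquare G 0 →* extSquare (↥H) 0 :=
  QuotientGroup.lift (nabla G 0) cp.phi0 (by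
    refine Subgroup.normalClosure_le_normal ?_
    rintro y ⟨a, rfl⟩
    rw [SetLike.mem_coe, MonoidHom.mem_ker, CPD.phi0_tmk, wmk_self])

lemma CPD.phi_wmk (cp : CPD G H K D) (g g' : G) :
    cp.phi (wmk G 0 g g') = wmk (↥H) 0 (cp.sig g) (cp.sig g') := by
  have : cp.phi (wmk G 0 g g') = cp.phi0 (tmk G 0 g g') := QuotientGroup.lift_mk' _ _ _
  rw [this, CPD.phi0_tmk]

lemma CPD.phi_dwmk (cp : CPD G H K D) (g : G) : cp.phi (dwmk G 0 g) = 1 := by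
  have : cp.phi (dwmk G 0 g) = cp.phi0 (dmk G 0 g) := QuotientGroup.lift_mk' _ _ _
  rw [this, CPD.phi0_dmk]

end Phi

end QTensor
namespace QTensor

namespace CPD

variable {G : Type} [Group G] {H K D : Subgroup G} (cp : CPD G H K D)
include cp

/-- `x ∧ d = 1` in `G ∧ G` for `d ∈ D`. -/
lemma wmk_xD {d : G} (hd : d ∈ D) (x : G) : wmk G 0 x d = 1 := by
  have hdK : d ∈ K := cp.D_le_K hd
  have hdc : ∀ y : G, d * y = y * d := cp.k_central d hdK
  have hx := cp.sig_kap x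
  set a : ↥H := cp.sig x
  set k : G := cp.kap x
  have hkc : ∀ y : G, k * y = y * k := cp.k_central k (cp.kap_mem x)
  have h1 := wrel1 (A := G) 0 (↑a) k d
  have e1 : (↑a : G) * k * (↑a)⁻¹ = k := conj_central hkc (↑a)
  have e2 : (↑a : G) * d * (↑a)⁻¹ = d := conj_central hdc (↑a)
  rw [e1, e2] at h1
  have h2 : wmk G 0 k d = 1 := cp.wmk_KK (cp.kap_mem x) hdK
  have h3 : wmk G 0 (↑a) d = 1 := by
    have hdH : d ∈ H := cp.D_le_H hd
    have : wmk G 0 (↑a) (↑(⟨d, hdH⟩ : ↥H)) = psi H (wmk (↥H) 0 a ⟨d, hdH⟩) :=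
      (psi_wmk H a ⟨d, hdH⟩).symm
    rw [this, cp.wmkH_d_right hd, map_one]
  rw [h2, one_mul, h3] at h1
  rw [hx, h1]

lemma pow_relindex_H_mem {h : G} (hh : h ∈ H) : h ^ (D.relIndex H) ∈ D := by
  have hN : (D.subgroupOf H).Normal := by
    constructor
    intro n hn g
    have hc : ∀ y : G, (↑n : G) * y = y * ↑n :=
      cp.k_central _ (cp.D_le_K ((Subgroup.mem_subgroupOf).mp hn))
    have : g * n * g⁻¹ = n := Subtype.ext (conj_central hc (↑g))
    rw [this]; exact hn
  have := @Subgroup.pow_index_mem _ _ (D.subgroupOf H) hN ⟨h, hh⟩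
  have h2 : ((⟨h, hh⟩ : ↥H) ^ (D.subgroupOf H).index : G) ∈ D :=
    (Subgroup.mem_subgroupOf).mp this
  simpa [Subgroup.relIndex] using h2

lemma pow_relindex_K_mem {k : G} (hk : k ∈ K) : k ^ (D.relIndex K) ∈ D := by
  have hN : (D.subgroupOf K).Normal := by
    constructor
    intro n hn g
    have hc : ∀ y : G, (↑n : G) * y = y * ↑n :=
      cp.k_central _ (cp.D_le_K ((Subgroup.mem_subgroupOf).mp hn))
    have : g * n * g⁻¹ = n := Subtype.ext (conj_central hc (↑g))
    rw [this]; exact hn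
  have := @Subgroup.pow_index_mem _ _ (D.subgroupOf K) hN ⟨k, hk⟩
  have h2 : ((⟨k, hk⟩ : ↥K) ^ (D.subgroupOf K).index : G) ∈ D :=
    (Subgroup.mem_subgroupOf).mp this
  simpa [Subgroup.relIndex] using h2

variable (hcop : Nat.Coprime (D.relIndex H) (D.relIndex K))
include hcop

lemma wmk_HK {h k : G} (hh : h ∈ H) (hk : k ∈ K) : wmk G 0 h k = 1 := by
  have hkc : ∀ y : G, k * y = y * k := cp.k_central k hk
  set x : extSquare G 0 := wmk G 0 h k with hx
  have hm : x ^ (D.relIndex H) = 1 := by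
    rw [hx, ← wmk_pow_left_central hkc]
    exact cp.wmk_KK (cp.D_le_K (cp.pow_relindex_H_mem hh)) hk
  have hn : x ^ (D.relIndex K) = 1 := by
    rw [hx, ← wmk_pow_right_central hkc]
    exact cp.wmk_xD (cp.pow_relindex_K_mem hk) h
  have d1 : orderOf x ∣ D.relIndex H := orderOf_dvd_of_pow_eq_one hm
  have d2 : orderOf x ∣ D.relIndex K := orderOf_dvd_of_pow_eq_one hn
  have : orderOf x ∣ 1 := hcop ▸ Nat.dvd_gcd d1 d2
  exact orderOf_eq_one_iff.mp (Nat.dvd_one.mp this)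

/-- `x ∧ k = 1` in `G ∧ G` for any `x` and `k ∈ K`. -/
lemma wmk_xK {k : G} (hk : k ∈ K) (x : G) : wmk G 0 x k = 1 := by
  have hkc : ∀ y : G, k * y = y * k := cp.k_central k hk
  have hx := cp.sig_kap x
  set a : ↥H := cp.sig x
  set κ : G := cp.kap x
  have hκc : ∀ y : G, κ * y = y * κ := cp.k_central κ (cp.kap_mem x)
  have h1 := wrel1 (A := G) 0 (↑a) κ k
  rw [conj_central hκc, conj_central hkc] at h1
  rw [cp.wmk_KK (cp.kap_mem x) hk, one_mul, cp.wmk_HK hcop a.2 hk] at h1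
  rw [hx, h1]

/-- `k ∧ x = 1` in `G ∧ G` for any `x` and `k ∈ K`. -/
lemma wmk_Kx {k : G} (hk : k ∈ K) (x : G) : wmk G 0 k x = 1 :=
  wmk_left_eq_one_of_central (cp.k_central k hk) (cp.wmk_xK hcop hk) x

end CPD

end QTensor
namespace QTensor

lemma extSquare_hom_ext {A M : Type} [Group A] [Group M] {f₁ f₂ : extSquare A 0 →* M}
    (ht : ∀ g h : A, f₁ (wmk A 0 g h) = f₂ (wmk A 0 g h))
    (hd : ∀ g : A, f₁ (dwmk A 0 g) = f₂ (dwmk A 0 g)) (x : extSquare A 0) :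
    f₁ x = f₂ x := by
  obtain ⟨t, rfl⟩ := QuotientGroup.mk'_surjective (nabla A 0) x
  obtain ⟨z, rfl⟩ := PresentedGroup.mk_surjective (rels A 0) t
  let F₁ := f₁.comp ((QuotientGroup.mk' (nabla A 0)).comp (PresentedGroup.mk (rels A 0)))
  let F₂ := f₂.comp ((QuotientGroup.mk' (nabla A 0)).comp (PresentedGroup.mk (rels A 0)))
  induction z using FreeGroup.induction_on with
  | C1 => exact (map_one F₁).trans (map_one F₂).symm
  | of x =>
      cases x with
      | t g h => exact ht g h
      | d g => exact hd g
  | inv_of x ih => exact (map_inv F₁ _).trans ((congrArg (·⁻¹) ih).trans (map_inv F₂ _).symm)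
  | mul x y ih1 ih2 =>
      exact (map_mul F₁ x y).trans ((congrArg₂ (· * ·) ih1 ih2).trans (map_mul F₂ x y).symm)

namespace CPD

variable {G : Type} [Group G] {H K D : Subgroup G} (cp : CPD G H K D)
    (hcop : Nat.Coprime (D.relIndex H) (D.relIndex K))
include cp

include hcop in
/-- `g ∧ g' = σ(g) ∧ g'` in `G ∧ G`. -/
lemma wmk_sig_fst (g g' : G) : wmk G 0 g g' = wmk G 0 (↑(cp.sig g)) g' := by
  have hx := cp.sig_kap g
  have hκc : ∀ y : G, cp.kap g * y = y * cp.kap g := cp.k_central _ (cp.kap_mem g)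
  have h1 := wrel1 (A := G) 0 (↑(cp.sig g)) (cp.kap g) g'
  rw [conj_central hκc] at h1
  rw [cp.wmk_Kx hcop (cp.kap_mem g), one_mul] at h1
  conv_lhs => rw [hx]
  exact h1

include hcop in
/-- `σ(g) ∧ g' = σ(g) ∧ σ(g')` in `G ∧ G`. -/
lemma wmk_sig_snd (x : G) (g' : G) : wmk G 0 x g' = wmk G 0 x (↑(cp.sig g')) := by
  have hx := cp.sig_kap g'
  have hκc : ∀ y : G, cp.kap g' * y = y * cp.kap g' := cp.k_central _ (cp.kap_mem g')
  have h1 := wrel2 (A := G) 0 x (↑(cp.sig g')) (cp.kap g')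
  rw [conj_central hκc] at h1
  rw [cp.wmk_xK hcop (cp.kap_mem g'), mul_one] at h1
  conv_lhs => rw [hx]
  exact h1

include hcop in
lemma psi_phi (x : extSquare G 0) : psi H (cp.phi x) = x := by
  have := extSquare_hom_ext (f₁ := (psi H).comp cp.phi) (f₂ := MonoidHom.id _) ?_ ?_ x
  · simpa using this
  · intro g h
    simp only [MonoidHom.comp_apply, MonoidHom.id_apply, cp.phi_wmk, psi_wmk]
    rw [← cp.wmk_sig_fst hcop, ← cp.wmk_sig_snd hcop]
  · intro g
    simp only [MonoidHom.comp_apply, MonoidHom.id_apply, cp.phi_dwmk, map_one,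
      dwmk_eq_one]

lemma phi_psi (y : extSquare (↥H) 0) : cp.phi (psi H y) = y := by
  have := extSquare_hom_ext (f₁ := cp.phi.comp (psi H)) (f₂ := MonoidHom.id _) ?_ ?_ y
  · simpa using this
  · intro a b
    simp only [MonoidHom.comp_apply, MonoidHom.id_apply, psi_wmk, cp.phi_wmk]
    rw [cp.wmk_sig_left K.one_mem (by rw [mul_one] : (↑a : G) = ↑a * 1),
      cp.wmk_sig_right K.one_mem (by rw [mul_one] : (↑b : G) = ↑b * 1)]
  · intro a
    simp only [MonoidHom.comp_apply, MonoidHom.id_apply, psi_dwmk, dwmk_eq_one,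
      map_one]

end CPD

end QTensor

open QTensor in
/-- If the finite group `G` is an internal central product of `H` and `K`
amalgamating `D`, with `K` cyclic, `(|H/D|, |K/D|) = 1` and `D ≤ Z^∧(H)`,
then `M(G) ≅ M(H)`. -/
theorem schurMultiplier_iso_of_centralProduct (G : Type) [Group G] [Finite G]
    (H K D : Subgroup G)
    (ηG : extSquare G 0 →* G)
    (hηG : ∀ g h : G, ηG (wmk G 0 g h) = g * h * g⁻¹ * h⁻¹)
    (ηH : extSquare H 0 →* H)
    (hηH : ∀ a b : H, ηH (wmk (↥H) 0 a b) = a * b * a⁻¹ * b⁻¹)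
    -- G is the internal central product of H and K amalgamating D:
    (hHK : ∀ g : G, ∃ h ∈ H, ∃ k ∈ K, g = h * k)
    (hD : H ⊓ K = D)
    (hcent : ∀ h ∈ H, ∀ k ∈ K, h * k = k * h)
    -- hypotheses:
    (hcyc : IsCyclic K)
    (hcop : Nat.Coprime (D.relIndex H) (D.relIndex K))
    (hDZ : ∀ x : H, (x : G) ∈ D → x ∈ Zext (↥H) 0) :
    Nonempty (ηG.ker ≃* ηH.ker) := by
  classical
  have cp : CPD G H K D := ⟨hHK, hD, hcent, hcyc, fun x hx b => hDZ x hx b⟩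
  -- compatibility of ψ with the η homomorphisms
  have heta : ∀ y : extSquare (↥H) 0, ηG (psi H y) = ↑(ηH y) := by
    intro y
    refine extSquare_hom_ext (f₁ := ηG.comp (psi H)) (f₂ := H.subtype.comp ηH) ?_ ?_ y
    · intro a b
      simp only [MonoidHom.comp_apply, psi_wmk, hηG, hηH, Subgroup.coe_subtype]
      push_cast
      rfl
    · intro a
      simp only [MonoidHom.comp_apply, psi_dwmk, dwmk_eq_one, map_one]
  have hker1 : ∀ x : ηG.ker, cp.phi ↑x ∈ ηH.ker := by
    intro x
    rw [MonoidHom.mem_ker]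
    have h1 : (↑(ηH (cp.phi ↑x)) : G) = 1 := by
      rw [← heta (cp.phi ↑x), cp.psi_phi hcop]
      exact MonoidHom.mem_ker.mp x.2
    exact_mod_cast h1
  have hker2 : ∀ y : ηH.ker, psi H ↑y ∈ ηG.ker := by
    intro y
    rw [MonoidHom.mem_ker, heta]
    rw [MonoidHom.mem_ker.mp y.2]
    exact OneMemClass.coe_one H
  refine ⟨{ toFun := fun x => ⟨cp.phi ↑x, hker1 x⟩
            invFun := fun y => ⟨psi H ↑y, hker2 y⟩
            left_inv := ?_
            right_inv := ?_
            map_mul' := ?_ }⟩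
  · intro x
    ext
    exact cp.psi_phi hcop ↑x
  · intro y
    ext
    exact cp.phi_psi ↑y
  · intro x y
    ext
    simp [map_mul]
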